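/- arXiv:2501.08869 — 2 statements merged into one kernel-verified Lean document; each statement's English description precedes it below -/
import Mathlib

section
/- Fix n ≥ 1, observed times U_1,…,U_n > 0, and weights C1_i, C2_i, C3_i ∈ [0,1] with C1_i + C2_i + C3_i = 1 for each i, and suppose Σ_{i=1}^n C1_i > 0, Σ_{i=1}^n C2_i > 0, and Σ_{i=1}^n C3_i > 0. Then ℓ is twice continuously differentiable on the open domain (0,∞) × (0,1) × (0,∞), all its mixed second-order partial derivatives (∂²ℓ/∂θ∂q, ∂²ℓ/∂θ∂γ, ∂²ℓ/∂q∂γ) vanish identically, and at every point of the domain the three pure second-order partial derivatives are strictly negative: ∂²ℓ/∂θ² = −(Σ C2_i)/θ² − Σ C3_i U_i² e^{−θU_i}/(1−e^{−θU_i})² < 0, ∂²ℓ/∂q² = −(Σ C2_i)/q² − (Σ C3_i)/(1−q)² < 0, and ∂²ℓ/∂γ² = −(Σ (1 − C2_i))/γ² < 0. Hence the Hessian of ℓ is a 3×3 diagonal matrix with strictly negative diagonal entries at every point, and is therefore negative definite everywhere on the domain. -/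
open Real Finset Matrix

/-- The EM surrogate (expected complete-data log-likelihood). -/
noncomputable def ell {n : ℕ} (U C1 C2 C3 : Fin n → ℝ) (θ q γ : ℝ) : ℝ :=
  ∑ i, (C1 i * (Real.log γ - γ * U i - θ * U i)
      + C2 i * (Real.log θ - θ * U i - γ * U i + Real.log q)
      + C3 i * (Real.log (1 - q) + Real.log (1 - Real.exp (-θ * U i)) + Real.log γ - γ * U i))


lemma one_sub_exp_pos' {t u : ℝ} (ht : 0 < t) (hu : 0 < u) :
    0 < 1 - Real.exp (-t * u) := by
  have : Real.exp (-t * u) < 1 := by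
    rw [Real.exp_lt_one_iff]; nlinarith
  linarith

lemma hasDerivAt_expneg' (u t : ℝ) :
    HasDerivAt (fun t => Real.exp (-t * u)) (-u * Real.exp (-t * u)) t := by
  have h : HasDerivAt (fun t : ℝ => -t * u) (-u) t := by
    simpa using ((hasDerivAt_id t).neg.mul_const u)
  simpa [mul_comm] using h.exp

lemma lem1' {t u : ℝ} (ht : 0 < t) (hu : 0 < u) :
    HasDerivAt (fun t => Real.log (1 - Real.exp (-t * u)))
      (u * Real.exp (-t * u) / (1 - Real.exp (-t * u))) t := by
  have h0 := one_sub_exp_pos' ht hu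
  have h : HasDerivAt (fun t => 1 - Real.exp (-t * u)) (u * Real.exp (-t * u)) t := by
    simpa using (hasDerivAt_const t (1:ℝ)).fun_sub (hasDerivAt_expneg' u t)
  simpa using h.log (ne_of_gt h0)

lemma lem2' {t u : ℝ} (ht : 0 < t) (hu : 0 < u) :
    HasDerivAt (fun t => u * Real.exp (-t * u) / (1 - Real.exp (-t * u)))
      (-(u ^ 2 * Real.exp (-t * u) / (1 - Real.exp (-t * u)) ^ 2)) t := by
  have h0 := one_sub_exp_pos' ht hu
  have hf : HasDerivAt (fun t => u * Real.exp (-t * u)) (u * (-u * Real.exp (-t * u))) t :=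
    (hasDerivAt_expneg' u t).const_mul u
  have hg : HasDerivAt (fun t => 1 - Real.exp (-t * u)) (u * Real.exp (-t * u)) t := by
    simpa using (hasDerivAt_const t (1:ℝ)).fun_sub (hasDerivAt_expneg' u t)
  have := hf.fun_div hg (ne_of_gt h0)
  refine this.congr_deriv ?_
  field_simp
  ring

lemma hasDerivAt_Ai {u t : ℝ} (ht : 0 < t) (hu : 0 < u) (c1 c2 c3 : ℝ) :
    HasDerivAt (fun t => c2 * Real.log t + c3 * Real.log (1 - Real.exp (-t * u))
        - (c1 + c2) * (t * u))
      (c2 * t⁻¹ + c3 * (u * Real.exp (-t * u) / (1 - Real.exp (-t * u))) - (c1 + c2) * u) t := by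
  have h1 : HasDerivAt (fun t => c2 * Real.log t) (c2 * t⁻¹) t :=
    (Real.hasDerivAt_log (ne_of_gt ht)).const_mul c2
  have h2 := (lem1' ht hu).const_mul c3
  have h3 : HasDerivAt (fun t => (c1 + c2) * (t * u)) ((c1 + c2) * u) t := by
    simpa using ((hasDerivAt_id t).mul_const u).const_mul (c1 + c2)
  exact (h1.add h2).sub h3

lemma hasDerivAt_Ai' {u t : ℝ} (ht : 0 < t) (hu : 0 < u) (c1 c2 c3 : ℝ) :
    HasDerivAt (fun t => c2 * t⁻¹ + c3 * (u * Real.exp (-t * u) / (1 - Real.exp (-t * u)))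
        - (c1 + c2) * u)
      (-(c2 / t ^ 2) - c3 * u ^ 2 * Real.exp (-t * u) / (1 - Real.exp (-t * u)) ^ 2) t := by
  have h0 := one_sub_exp_pos' ht hu
  have h1 : HasDerivAt (fun t : ℝ => c2 * t⁻¹) (c2 * (-(t ^ 2)⁻¹)) t :=
    (hasDerivAt_inv (ne_of_gt ht)).const_mul c2
  have h2 := (lem2' ht hu).const_mul c3
  have h := (h1.fun_add h2).fun_sub (hasDerivAt_const t ((c1 + c2) * u))
  refine h.congr_deriv ?_
  field_simp
  ring

lemma hasDerivAt_Bi {s : ℝ} (hs : 0 < s) (hs1 : s < 1) (c2 c3 : ℝ) :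
    HasDerivAt (fun s => c2 * Real.log s + c3 * Real.log (1 - s))
      (c2 * s⁻¹ + c3 * (-(1 - s)⁻¹)) s := by
  have h1 : HasDerivAt (fun s => c2 * Real.log s) (c2 * s⁻¹) s :=
    (Real.hasDerivAt_log (ne_of_gt hs)).const_mul c2
  have hin : HasDerivAt (fun s : ℝ => 1 - s) (-1) s := by
    simpa using (hasDerivAt_const s (1:ℝ)).fun_sub (hasDerivAt_id s)
  have h2 := (hin.log (by linarith : (1:ℝ) - s ≠ 0)).const_mul c3
  have h := h1.fun_add h2
  refine h.congr_deriv ?_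
  field_simp

lemma hasDerivAt_Bi' {s : ℝ} (hs : 0 < s) (hs1 : s < 1) (c2 c3 : ℝ) :
    HasDerivAt (fun s => c2 * s⁻¹ + c3 * (-(1 - s)⁻¹))
      (-(c2 / s ^ 2) - c3 / (1 - s) ^ 2) s := by
  have h1 : HasDerivAt (fun s : ℝ => c2 * s⁻¹) (c2 * (-(s ^ 2)⁻¹)) s :=
    (hasDerivAt_inv (ne_of_gt hs)).const_mul c2
  have hin : HasDerivAt (fun s : ℝ => 1 - s) (-1) s := by
    simpa using (hasDerivAt_const s (1:ℝ)).fun_sub (hasDerivAt_id s)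
  have hinv : HasDerivAt (fun s : ℝ => (1 - s)⁻¹) (((1 - s) ^ 2)⁻¹) s := by
    have h := (hasDerivAt_inv (by linarith : (1:ℝ) - s ≠ 0)).comp s hin
    exact h.congr_deriv (by simp)
  have h2 := hinv.neg.const_mul c3
  have h := h1.fun_add h2
  refine h.congr_deriv ?_
  field_simp
  ring

lemma hasDerivAt_Gi {r : ℝ} (hr : 0 < r) (u c1 c2 c3 : ℝ) :
    HasDerivAt (fun r => (c1 + c3) * Real.log r - (c1 + c2 + c3) * (r * u))
      ((c1 + c3) * r⁻¹ - (c1 + c2 + c3) * u) r := by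
  have h1 : HasDerivAt (fun r => (c1 + c3) * Real.log r) ((c1 + c3) * r⁻¹) r :=
    (Real.hasDerivAt_log (ne_of_gt hr)).const_mul (c1 + c3)
  have h3 : HasDerivAt (fun r => (c1 + c2 + c3) * (r * u)) ((c1 + c2 + c3) * u) r := by
    simpa using ((hasDerivAt_id r).mul_const u).const_mul (c1 + c2 + c3)
  exact h1.sub h3

lemma hasDerivAt_Gi' {r : ℝ} (hr : 0 < r) (u c1 c2 c3 : ℝ) :
    HasDerivAt (fun r => (c1 + c3) * r⁻¹ - (c1 + c2 + c3) * u)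
      (-((c1 + c3) / r ^ 2)) r := by
  have h1 : HasDerivAt (fun r : ℝ => (c1 + c3) * r⁻¹) ((c1 + c3) * (-(r ^ 2)⁻¹)) r :=
    (hasDerivAt_inv (ne_of_gt hr)).const_mul (c1 + c3)
  have h := h1.fun_sub (hasDerivAt_const r ((c1 + c2 + c3) * u))
  refine h.congr_deriv ?_
  field_simp
  ring

noncomputable def funA {n : ℕ} (U C1 C2 C3 : Fin n → ℝ) (t : ℝ) : ℝ :=
  ∑ i, (C2 i * Real.log t + C3 i * Real.log (1 - Real.exp (-t * U i))
      - (C1 i + C2 i) * (t * U i))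

noncomputable def funA' {n : ℕ} (U C1 C2 C3 : Fin n → ℝ) (t : ℝ) : ℝ :=
  ∑ i, (C2 i * t⁻¹ + C3 i * (U i * Real.exp (-t * U i) / (1 - Real.exp (-t * U i)))
      - (C1 i + C2 i) * U i)

noncomputable def funB {n : ℕ} (C2 C3 : Fin n → ℝ) (s : ℝ) : ℝ :=
  ∑ i, (C2 i * Real.log s + C3 i * Real.log (1 - s))

noncomputable def funB' {n : ℕ} (C2 C3 : Fin n → ℝ) (s : ℝ) : ℝ :=
  ∑ i, (C2 i * s⁻¹ + C3 i * (-(1 - s)⁻¹))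

noncomputable def funG {n : ℕ} (U C1 C2 C3 : Fin n → ℝ) (r : ℝ) : ℝ :=
  ∑ i, ((C1 i + C3 i) * Real.log r - (C1 i + C2 i + C3 i) * (r * U i))

noncomputable def funG' {n : ℕ} (U C1 C2 C3 : Fin n → ℝ) (r : ℝ) : ℝ :=
  ∑ i, ((C1 i + C3 i) * r⁻¹ - (C1 i + C2 i + C3 i) * U i)

lemma ell_decomp {n : ℕ} (U C1 C2 C3 : Fin n → ℝ) (t s r : ℝ) :
    ell U C1 C2 C3 t s r = funA U C1 C2 C3 t + funB C2 C3 s + funG U C1 C2 C3 r := by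
  unfold ell funA funB funG
  rw [← Finset.sum_add_distrib, ← Finset.sum_add_distrib]
  exact Finset.sum_congr rfl fun i _ => by ring

lemma hasDerivAt_funA {n : ℕ} (U C1 C2 C3 : Fin n → ℝ) (hU : ∀ i, 0 < U i)
    {t : ℝ} (ht : 0 < t) :
    HasDerivAt (funA U C1 C2 C3) (funA' U C1 C2 C3 t) t := by
  unfold funA funA'
  exact HasDerivAt.fun_sum fun i _ => hasDerivAt_Ai ht (hU i) _ _ _

lemma hasDerivAt_funA' {n : ℕ} (U C1 C2 C3 : Fin n → ℝ) (hU : ∀ i, 0 < U i)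
    {t : ℝ} (ht : 0 < t) :
    HasDerivAt (funA' U C1 C2 C3)
      (∑ i, (-(C2 i / t ^ 2)
        - C3 i * U i ^ 2 * Real.exp (-t * U i) / (1 - Real.exp (-t * U i)) ^ 2)) t := by
  unfold funA'
  exact HasDerivAt.fun_sum fun i _ => hasDerivAt_Ai' ht (hU i) _ _ _

lemma hasDerivAt_funB {n : ℕ} (C2 C3 : Fin n → ℝ) {s : ℝ} (hs : 0 < s) (hs1 : s < 1) :
    HasDerivAt (funB C2 C3) (funB' C2 C3 s) s := by
  unfold funB funB'
  exact HasDerivAt.fun_sum fun i _ => hasDerivAt_Bi hs hs1 _ _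

lemma hasDerivAt_funB' {n : ℕ} (C2 C3 : Fin n → ℝ) {s : ℝ} (hs : 0 < s) (hs1 : s < 1) :
    HasDerivAt (funB' C2 C3)
      (∑ i, (-(C2 i / s ^ 2) - C3 i / (1 - s) ^ 2)) s := by
  unfold funB'
  exact HasDerivAt.fun_sum fun i _ => hasDerivAt_Bi' hs hs1 _ _

lemma hasDerivAt_funG {n : ℕ} (U C1 C2 C3 : Fin n → ℝ) {r : ℝ} (hr : 0 < r) :
    HasDerivAt (funG U C1 C2 C3) (funG' U C1 C2 C3 r) r := by
  unfold funG funG'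
  exact HasDerivAt.fun_sum fun i _ => hasDerivAt_Gi hr _ _ _ _

lemma hasDerivAt_funG' {n : ℕ} (U C1 C2 C3 : Fin n → ℝ) {r : ℝ} (hr : 0 < r) :
    HasDerivAt (funG' U C1 C2 C3) (∑ i, (-((C1 i + C3 i) / r ^ 2))) r := by
  unfold funG'
  exact HasDerivAt.fun_sum fun i _ => hasDerivAt_Gi' hr _ _ _ _

lemma deriv_ell_theta {n : ℕ} (U C1 C2 C3 : Fin n → ℝ) (hU : ∀ i, 0 < U i)
    (s r : ℝ) {t : ℝ} (ht : 0 < t) :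
    deriv (fun t => ell U C1 C2 C3 t s r) t = funA' U C1 C2 C3 t := by
  have he : (fun t => ell U C1 C2 C3 t s r)
      = fun t => funA U C1 C2 C3 t + (funB C2 C3 s + funG U C1 C2 C3 r) :=
    funext fun t => by rw [ell_decomp]; ring
  rw [he, deriv_add_const, (hasDerivAt_funA U C1 C2 C3 hU ht).deriv]

lemma deriv_ell_q {n : ℕ} (U C1 C2 C3 : Fin n → ℝ) (t r : ℝ) {s : ℝ}
    (hs : 0 < s) (hs1 : s < 1) :
    deriv (fun s => ell U C1 C2 C3 t s r) s = funB' C2 C3 s := by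
  have he : (fun s => ell U C1 C2 C3 t s r)
      = fun s => funB C2 C3 s + (funA U C1 C2 C3 t + funG U C1 C2 C3 r) :=
    funext fun s => by rw [ell_decomp]; ring
  rw [he, deriv_add_const, (hasDerivAt_funB C2 C3 hs hs1).deriv]

lemma deriv_ell_gamma {n : ℕ} (U C1 C2 C3 : Fin n → ℝ) (t s : ℝ) {r : ℝ} (hr : 0 < r) :
    deriv (fun r => ell U C1 C2 C3 t s r) r = funG' U C1 C2 C3 r := by
  have he : (fun r => ell U C1 C2 C3 t s r)
      = fun r => funG U C1 C2 C3 r + (funA U C1 C2 C3 t + funB C2 C3 s) :=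
    funext fun r => by rw [ell_decomp]; ring
  rw [he, deriv_add_const, (hasDerivAt_funG U C1 C2 C3 hr).deriv]

/-- The Hessian of the EM surrogate is diagonal with strictly negative diagonal entries, hence
negative definite, everywhere on `(0,∞) × (0,1) × (0,∞)`: `ℓ` is `C²` there, the mixed
second-order partials vanish identically, and the pure second-order partials are the stated
strictly negative quantities. -/
theorem EM_surrogate_hessian_negative_definite {n : ℕ} (hn : 1 ≤ n) (U C1 C2 C3 : Fin n → ℝ)
    (hU : ∀ i, 0 < U i)
    (hC1 : ∀ i, C1 i ∈ Set.Icc (0 : ℝ) 1) (hC2 : ∀ i, C2 i ∈ Set.Icc (0 : ℝ) 1)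
    (hC3 : ∀ i, C3 i ∈ Set.Icc (0 : ℝ) 1) (hsum : ∀ i, C1 i + C2 i + C3 i = 1)
    (hS1 : 0 < ∑ i, C1 i) (hS2 : 0 < ∑ i, C2 i) (hS3 : 0 < ∑ i, C3 i) :
    -- twice continuous differentiability on the open domain
    ContDiffOn ℝ 2 (fun p : ℝ × ℝ × ℝ => ell U C1 C2 C3 p.1 p.2.1 p.2.2)
      (Set.Ioi (0 : ℝ) ×ˢ Set.Ioo (0 : ℝ) 1 ×ˢ Set.Ioi (0 : ℝ)) ∧
    ∀ θ q γ : ℝ, 0 < θ → q ∈ Set.Ioo (0 : ℝ) 1 → 0 < γ →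
      -- pure second-order partial derivatives, strictly negative
      (HasDerivAt (deriv (fun t => ell U C1 C2 C3 t q γ))
        (-(∑ i, C2 i) / θ ^ 2
          - ∑ i, C3 i * U i ^ 2 * Real.exp (-θ * U i) / (1 - Real.exp (-θ * U i)) ^ 2) θ ∧
       -(∑ i, C2 i) / θ ^ 2
          - ∑ i, C3 i * U i ^ 2 * Real.exp (-θ * U i) / (1 - Real.exp (-θ * U i)) ^ 2 < 0) ∧
      (HasDerivAt (deriv (fun s => ell U C1 C2 C3 θ s γ))
        (-(∑ i, C2 i) / q ^ 2 - (∑ i, C3 i) / (1 - q) ^ 2) q ∧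
       -(∑ i, C2 i) / q ^ 2 - (∑ i, C3 i) / (1 - q) ^ 2 < 0) ∧
      (HasDerivAt (deriv (fun r => ell U C1 C2 C3 θ q r))
        (-(∑ i, (1 - C2 i)) / γ ^ 2) γ ∧
       -(∑ i, (1 - C2 i)) / γ ^ 2 < 0) ∧
      -- mixed second-order partial derivatives vanish
      HasDerivAt (fun s => deriv (fun t => ell U C1 C2 C3 t s γ) θ) 0 q ∧
      HasDerivAt (fun r => deriv (fun t => ell U C1 C2 C3 t q r) θ) 0 γ ∧
      HasDerivAt (fun r => deriv (fun s => ell U C1 C2 C3 θ s r) q) 0 γ ∧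
      -- the (diagonal) Hessian is negative definite
      (∀ x : Fin 3 → ℝ, x ≠ 0 →
        x ⬝ᵥ (Matrix.diagonal
          ![-(∑ i, C2 i) / θ ^ 2
              - ∑ i, C3 i * U i ^ 2 * Real.exp (-θ * U i) / (1 - Real.exp (-θ * U i)) ^ 2,
            -(∑ i, C2 i) / q ^ 2 - (∑ i, C3 i) / (1 - q) ^ 2,
            -(∑ i, (1 - C2 i)) / γ ^ 2]).mulVec x < 0) := by
  constructor
  · -- ContDiffOn
    intro p hp
    simp only [Set.mem_prod, Set.mem_Ioi, Set.mem_Ioo] at hp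
    obtain ⟨h1, ⟨hq1, hq2⟩, h3⟩ := hp
    apply ContDiffAt.contDiffWithinAt
    unfold ell
    apply ContDiffAt.sum
    intro i _
    have cθ : ContDiffAt ℝ 2 (fun p : ℝ × ℝ × ℝ => p.1) p := contDiff_fst.contDiffAt
    have cq : ContDiffAt ℝ 2 (fun p : ℝ × ℝ × ℝ => p.2.1) p :=
      (contDiff_fst.comp contDiff_snd).contDiffAt
    have cγ : ContDiffAt ℝ 2 (fun p : ℝ × ℝ × ℝ => p.2.2) p :=
      (contDiff_snd.comp contDiff_snd).contDiffAt
    have hlogθ : ContDiffAt ℝ 2 (fun p : ℝ × ℝ × ℝ => Real.log p.1) p :=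
      cθ.log (ne_of_gt h1)
    have hlogq : ContDiffAt ℝ 2 (fun p : ℝ × ℝ × ℝ => Real.log p.2.1) p :=
      cq.log (ne_of_gt hq1)
    have hlogγ : ContDiffAt ℝ 2 (fun p : ℝ × ℝ × ℝ => Real.log p.2.2) p :=
      cγ.log (ne_of_gt h3)
    have hlog1q : ContDiffAt ℝ 2 (fun p : ℝ × ℝ × ℝ => Real.log (1 - p.2.1)) p :=
      (contDiffAt_const.sub cq).log (ne_of_gt (by linarith))
    have hexp : ContDiffAt ℝ 2 (fun p : ℝ × ℝ × ℝ => Real.exp (-p.1 * U i)) p :=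
      (cθ.neg.mul contDiffAt_const).exp
    have hlogE : ContDiffAt ℝ 2
        (fun p : ℝ × ℝ × ℝ => Real.log (1 - Real.exp (-p.1 * U i))) p :=
      (contDiffAt_const.sub hexp).log (ne_of_gt (one_sub_exp_pos' h1 (hU i)))
    exact ((contDiffAt_const.mul
        ((hlogγ.sub (cγ.mul contDiffAt_const)).sub (cθ.mul contDiffAt_const))).add
      (contDiffAt_const.mul
        (((hlogθ.sub (cθ.mul contDiffAt_const)).sub (cγ.mul contDiffAt_const)).add hlogq))).add
      (contDiffAt_const.mul
        (((hlog1q.add hlogE).add hlogγ).sub (cγ.mul contDiffAt_const)))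
  · intro θ q γ hθ hq hγ
    obtain ⟨hq1, hq2⟩ := hq
    -- negativity facts
    have hθθ : -(∑ i, C2 i) / θ ^ 2
        - ∑ i, C3 i * U i ^ 2 * Real.exp (-θ * U i) / (1 - Real.exp (-θ * U i)) ^ 2 < 0 := by
      have hp1 : 0 < (∑ i, C2 i) / θ ^ 2 := div_pos hS2 (by positivity)
      have hp2 : 0 ≤ ∑ i, C3 i * U i ^ 2 * Real.exp (-θ * U i)
          / (1 - Real.exp (-θ * U i)) ^ 2 := by
        apply Finset.sum_nonneg
        intro i _
        apply div_nonneg _ (sq_nonneg _)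
        exact mul_nonneg (mul_nonneg (hC3 i).1 (sq_nonneg _)) (Real.exp_nonneg _)
      rw [neg_div]
      linarith
    have hqq : -(∑ i, C2 i) / q ^ 2 - (∑ i, C3 i) / (1 - q) ^ 2 < 0 := by
      have hp1 : 0 < (∑ i, C2 i) / q ^ 2 := div_pos hS2 (by positivity)
      have hp2 : 0 < (∑ i, C3 i) / (1 - q) ^ 2 :=
        div_pos hS3 (pow_pos (by linarith) 2)
      rw [neg_div]; linarith
    have hsum2 : ∑ i, (1 - C2 i) = ∑ i, C1 i + ∑ i, C3 i := by
      rw [← Finset.sum_add_distrib]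
      exact Finset.sum_congr rfl fun i _ => by linarith [hsum i]
    have hγγ : -(∑ i, (1 - C2 i)) / γ ^ 2 < 0 := by
      have hp1 : 0 < (∑ i, (1 - C2 i)) / γ ^ 2 := by
        apply div_pos _ (by positivity)
        rw [hsum2]; linarith
      rw [neg_div]; linarith
    refine ⟨⟨?_, hθθ⟩, ⟨?_, hqq⟩, ⟨?_, hγγ⟩, ?_, ?_, ?_, ?_⟩
    · -- ∂²/∂θ²
      have hev : deriv (fun t => ell U C1 C2 C3 t q γ) =ᶠ[nhds θ] funA' U C1 C2 C3 := by
        filter_upwards [Ioi_mem_nhds hθ] with t ht using deriv_ell_theta U C1 C2 C3 hU q γ ht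
      have h2 := (hasDerivAt_funA' U C1 C2 C3 hU hθ).congr_of_eventuallyEq hev
      refine h2.congr_deriv ?_
      have e1 : ∑ i, (-(C2 i / θ ^ 2)
          - C3 i * U i ^ 2 * Real.exp (-θ * U i) / (1 - Real.exp (-θ * U i)) ^ 2)
          = -((∑ i, C2 i) / θ ^ 2)
            - ∑ i, C3 i * U i ^ 2 * Real.exp (-θ * U i) / (1 - Real.exp (-θ * U i)) ^ 2 := by
        rw [Finset.sum_sub_distrib, Finset.sum_neg_distrib, Finset.sum_div]
      rw [e1, neg_div]
    · -- ∂²/∂q²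
      have hev : deriv (fun s => ell U C1 C2 C3 θ s γ) =ᶠ[nhds q] funB' C2 C3 := by
        filter_upwards [Ioo_mem_nhds hq1 hq2] with s hs
          using deriv_ell_q U C1 C2 C3 θ γ hs.1 hs.2
      have h2 := (hasDerivAt_funB' C2 C3 hq1 hq2).congr_of_eventuallyEq hev
      refine h2.congr_deriv ?_
      have e1 : ∑ i, (-(C2 i / q ^ 2) - C3 i / (1 - q) ^ 2)
          = -((∑ i, C2 i) / q ^ 2) - (∑ i, C3 i) / (1 - q) ^ 2 := by
        rw [Finset.sum_sub_distrib, Finset.sum_neg_distrib, Finset.sum_div, Finset.sum_div]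
      rw [e1, neg_div]
    · -- ∂²/∂γ²
      have hev : deriv (fun r => ell U C1 C2 C3 θ q r) =ᶠ[nhds γ] funG' U C1 C2 C3 := by
        filter_upwards [Ioi_mem_nhds hγ] with r hr using deriv_ell_gamma U C1 C2 C3 θ q hr
      have h2 := (hasDerivAt_funG' U C1 C2 C3 hγ).congr_of_eventuallyEq hev
      refine h2.congr_deriv ?_
      have e1 : ∑ i, -((C1 i + C3 i) / γ ^ 2) = -((∑ i, (1 - C2 i)) / γ ^ 2) := by
        rw [show (∑ i, -((C1 i + C3 i) / γ ^ 2)) = ∑ i, -((1 - C2 i) / γ ^ 2) from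
          Finset.sum_congr rfl fun i _ => by
            rw [show C1 i + C3 i = 1 - C2 i from by linarith [hsum i]]]
        rw [Finset.sum_neg_distrib, Finset.sum_div]
      rw [e1, neg_div]
    · -- mixed θq
      have : (fun s => deriv (fun t => ell U C1 C2 C3 t s γ) θ)
          = fun _ => funA' U C1 C2 C3 θ :=
        funext fun s => deriv_ell_theta U C1 C2 C3 hU s γ hθ
      rw [this]
      exact hasDerivAt_const _ _
    · -- mixed θγ
      have : (fun r => deriv (fun t => ell U C1 C2 C3 t q r) θ)
          = fun _ => funA' U C1 C2 C3 θ :=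
        funext fun r => deriv_ell_theta U C1 C2 C3 hU q r hθ
      rw [this]
      exact hasDerivAt_const _ _
    · -- mixed qγ
      have : (fun r => deriv (fun s => ell U C1 C2 C3 θ s r) q)
          = fun _ => funB' C2 C3 q :=
        funext fun r => deriv_ell_q U C1 C2 C3 θ r hq1 hq2
      rw [this]
      exact hasDerivAt_const _ _
    · -- negative definiteness
      intro x hx
      set v : Fin 3 → ℝ :=
        ![-(∑ i, C2 i) / θ ^ 2
            - ∑ i, C3 i * U i ^ 2 * Real.exp (-θ * U i) / (1 - Real.exp (-θ * U i)) ^ 2,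
          -(∑ i, C2 i) / q ^ 2 - (∑ i, C3 i) / (1 - q) ^ 2,
          -(∑ i, (1 - C2 i)) / γ ^ 2] with hv
      have hd : ∀ j : Fin 3, v j < 0 := by
        intro j
        fin_cases j
        · simpa [hv] using hθθ
        · simpa [hv] using hqq
        · simpa [hv] using hγγ
      have key : x ⬝ᵥ (Matrix.diagonal v).mulVec x = ∑ j, v j * x j ^ 2 := by
        rw [dotProduct]
        exact Finset.sum_congr rfl fun j _ => by rw [Matrix.mulVec_diagonal]; ring
      rw [key]
      obtain ⟨j, hj⟩ := Function.ne_iff.mp hx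
      have hlt : ∑ j, v j * x j ^ 2 < ∑ _j : Fin 3, (0 : ℝ) := by
        apply Finset.sum_lt_sum
        · intro i _
          nlinarith [hd i, sq_nonneg (x i)]
        · refine ⟨j, Finset.mem_univ j, ?_⟩
          have hx2 : 0 < x j ^ 2 :=
            lt_of_le_of_ne (sq_nonneg _) (Ne.symm (pow_ne_zero 2 hj))
          nlinarith [hd j]
      simpa using hlt
end

section
/- Fix n ≥ 1, observed times U_1,…,U_n > 0, and weights C1_i, C2_i, C3_i ∈ [0,1] with C1_i + C2_i + C3_i = 1 for each i, and suppose Σ_{i=1}^n C1_i > 0, Σ_{i=1}^n C2_i > 0, and Σ_{i=1}^n C3_i > 0. If (θ*, q*, γ*) ∈ (0,∞) × (0,1) × (0,∞) satisfies the three stationarity conditions q* = (Σ C2_i)/(Σ (1 − C1_i)), γ* = (Σ (1 − C2_i))/(Σ U_i), and θ*·Σ (C3_i − 1)U_i + Σ C2_i + θ*·Σ C3_i U_i e^{−θ*U_i}/(1 − e^{−θ*U_i}) = 0, then (θ*, q*, γ*) is a global maximizer of ℓ on (0,∞) × (0,1) × (0,∞), and it is the unique such maximizer. (This establishes that the M-step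 solutions of Theorem 2 are indeed maximizers of the surrogate.) -/
open Real Finset

/-- Tangent-line inequality for the logarithm. -/
lemma log_tangent_le {x y : ℝ} (hx : 0 < x) (hy : 0 < y) :
    Real.log x - Real.log y ≤ (x - y) / y := by
  rw [← Real.log_div hx.ne' hy.ne']
  have h := Real.log_le_sub_one_of_pos (div_pos hx hy)
  have h2 : x / y - 1 = (x - y) / y := by field_simp
  linarith

/-- Strict tangent-line inequality for the logarithm. -/
lemma log_tangent_lt {x y : ℝ} (hx : 0 < x) (hy : 0 < y) (hne : x ≠ y) :
    Real.log x - Real.log y < (x - y) / y := by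
  rw [← Real.log_div hx.ne' hy.ne']
  have hne1 : x / y ≠ 1 := by simp only [ne_eq, div_eq_one_iff_eq hy.ne']; exact hne
  have h := Real.log_lt_sub_one_of_pos (div_pos hx hy) hne1
  have h2 : x / y - 1 = (x - y) / y := by field_simp
  linarith

/-- Tangent-line (concavity) inequality for `t ↦ log (1 - exp (-t))` on `(0,∞)`. -/
lemma phi_tangent {s t : ℝ} (hs : 0 < s) (ht : 0 < t) :
    Real.log (1 - Real.exp (-t)) - Real.log (1 - Real.exp (-s))
      ≤ (t - s) * Real.exp (-s) / (1 - Real.exp (-s)) := by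
  have ha : Real.exp (-t) < 1 := by
    have := Real.exp_lt_exp.mpr (show -t < 0 by linarith); simpa using this
  have hb : Real.exp (-s) < 1 := by
    have := Real.exp_lt_exp.mpr (show -s < 0 by linarith); simpa using this
  have ha0 : (0:ℝ) < 1 - Real.exp (-t) := by linarith
  have hb0 : (0:ℝ) < 1 - Real.exp (-s) := by linarith
  have h1 := log_tangent_le ha0 hb0
  have h2 : Real.exp (-s) - Real.exp (-t) ≤ (t - s) * Real.exp (-s) := by
    have e1 : Real.exp (-t) = Real.exp (-s) * Real.exp (s - t) := by
      rw [← Real.exp_add]; ring_nf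
    have e2 : (s - t) + 1 ≤ Real.exp (s - t) := Real.add_one_le_exp _
    nlinarith [Real.exp_pos (-s)]
  calc Real.log (1 - Real.exp (-t)) - Real.log (1 - Real.exp (-s))
      ≤ ((1 - Real.exp (-t)) - (1 - Real.exp (-s))) / (1 - Real.exp (-s)) := h1
    _ ≤ (t - s) * Real.exp (-s) / (1 - Real.exp (-s)) := by
        apply (div_le_div_iff_of_pos_right hb0).mpr; linarith

/-- The surrogate separates into functions of `θ`, `q`, `γ`. -/
lemma ell_eq {n : ℕ} (U C1 C2 C3 : Fin n → ℝ) (θ q γ : ℝ) :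
    ell U C1 C2 C3 θ q γ =
      (∑ i, C2 i) * Real.log θ - θ * (∑ i, (C1 i + C2 i) * U i)
      + (∑ i, C3 i * Real.log (1 - Real.exp (-θ * U i)))
      + (∑ i, C2 i) * Real.log q + (∑ i, C3 i) * Real.log (1 - q)
      + (∑ i, (C1 i + C3 i)) * Real.log γ - γ * (∑ i, (C1 i + C2 i + C3 i) * U i) := by
  simp only [ell, Finset.sum_mul, Finset.mul_sum, ← Finset.sum_add_distrib,
    ← Finset.sum_sub_distrib]
  exact Finset.sum_congr rfl fun i _ => by ring

/-- Abstract core: one-dimensional tangent bounds combine to give the (strict) maximizer. -/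
lemma em_core {A B P T M R θ θs q qs γ γs Fθ Fθs : ℝ}
    (hA : 0 < A) (hB : 0 < B) (hP : 0 < P) (hT : 0 < T)
    (hθ : 0 < θ) (hθs : 0 < θs) (hq0 : 0 < q) (hq1 : q < 1)
    (hqs0 : 0 < qs) (hqs1 : qs < 1) (hγ : 0 < γ) (hγs : 0 < γs)
    (hqv : qs = A / (A + B)) (hγv : γs = P / T) (hAθ : A = θs * (M - R))
    (hF : Fθ - Fθs ≤ (θ - θs) * R) :
    (A * Real.log θ - θ * M + Fθ + A * Real.log q + B * Real.log (1 - q)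
        + P * Real.log γ - γ * T
      ≤ A * Real.log θs - θs * M + Fθs + A * Real.log qs + B * Real.log (1 - qs)
        + P * Real.log γs - γs * T) ∧
    ((θ ≠ θs ∨ q ≠ qs ∨ γ ≠ γs) →
      A * Real.log θ - θ * M + Fθ + A * Real.log q + B * Real.log (1 - q)
        + P * Real.log γ - γ * T
      < A * Real.log θs - θs * M + Fθs + A * Real.log qs + B * Real.log (1 - qs)
        + P * Real.log γs - γs * T) := by
  have hAB : 0 < A + B := by linarith
  have hq0' : (0:ℝ) < 1 - q := by linarith
  have hqs0' : (0:ℝ) < 1 - qs := by linarith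
  have e1 : A * ((θ - θs) / θs) = θ * M - θs * M - (θ * R - θs * R) := by
    rw [hAθ]; field_simp
  have e3 : A * ((q - qs) / qs) = (A + B) * q - (A + B) * qs := by
    rw [hqv]; field_simp
  have e4 : B * (((1 - q) - (1 - qs)) / (1 - qs)) = (A + B) * qs - (A + B) * q := by
    rw [hqv]; field_simp; rw [show A + B - A = B by ring]; field_simp; ring
  have e5 : P * ((γ - γs) / γs) = T * γ - T * γs := by
    rw [hγv]; field_simp
  have b1 : A * (Real.log θ - Real.log θs) ≤ A * ((θ - θs) / θs) :=
    mul_le_mul_of_nonneg_left (log_tangent_le hθ hθs) hA.le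
  have b3 : A * (Real.log q - Real.log qs) ≤ A * ((q - qs) / qs) :=
    mul_le_mul_of_nonneg_left (log_tangent_le hq0 hqs0) hA.le
  have b4 : B * (Real.log (1 - q) - Real.log (1 - qs))
      ≤ B * (((1 - q) - (1 - qs)) / (1 - qs)) :=
    mul_le_mul_of_nonneg_left (log_tangent_le hq0' hqs0') hB.le
  have b5 : P * (Real.log γ - Real.log γs) ≤ P * ((γ - γs) / γs) :=
    mul_le_mul_of_nonneg_left (log_tangent_le hγ hγs) hP.le
  rw [e1] at b1; rw [e3] at b3; rw [e4] at b4; rw [e5] at b5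
  constructor
  · linarith [b1, b3, b4, b5, hF]
  · rintro (h | h | h)
    · have b1s : A * (Real.log θ - Real.log θs) < A * ((θ - θs) / θs) :=
        mul_lt_mul_of_pos_left (log_tangent_lt hθ hθs h) hA
      rw [e1] at b1s
      linarith [b1s, b3, b4, b5, hF]
    · have b3s : A * (Real.log q - Real.log qs) < A * ((q - qs) / qs) :=
        mul_lt_mul_of_pos_left (log_tangent_lt hq0 hqs0 h) hA
      rw [e3] at b3s
      linarith [b1, b3s, b4, b5, hF]
    · have b5s : P * (Real.log γ - Real.log γs) < P * ((γ - γs) / γs) :=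
        mul_lt_mul_of_pos_left (log_tangent_lt hγ hγs h) hP
      rw [e5] at b5s
      linarith [b1, b3, b4, b5s, hF]

/-- The M-step solutions of Theorem 2 are the unique global maximizer of the surrogate: if
`(θ*, q*, γ*)` lies in `(0,∞) × (0,1) × (0,∞)` and satisfies the three stationarity
conditions, then it is a global maximizer of `ℓ` on that domain and is the unique one. -/
theorem EM_Mstep_global_maximizer {n : ℕ} (hn : 1 ≤ n) (U C1 C2 C3 : Fin n → ℝ)
    (hU : ∀ i, 0 < U i)
    (hC1 : ∀ i, C1 i ∈ Set.Icc (0 : ℝ) 1) (hC2 : ∀ i, C2 i ∈ Set.Icc (0 : ℝ) 1)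
    (hC3 : ∀ i, C3 i ∈ Set.Icc (0 : ℝ) 1) (hsum : ∀ i, C1 i + C2 i + C3 i = 1)
    (hS1 : 0 < ∑ i, C1 i) (hS2 : 0 < ∑ i, C2 i) (hS3 : 0 < ∑ i, C3 i)
    (θs qs γs : ℝ) (hθs : 0 < θs) (hqs : qs ∈ Set.Ioo (0 : ℝ) 1) (hγs : 0 < γs)
    (hq_eq : qs = (∑ i, C2 i) / (∑ i, (1 - C1 i)))
    (hγ_eq : γs = (∑ i, (1 - C2 i)) / (∑ i, U i))
    (hθ_eq : θs * (∑ i, (C3 i - 1) * U i) + (∑ i, C2 i)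
        + θs * ∑ i, C3 i * U i * Real.exp (-θs * U i) / (1 - Real.exp (-θs * U i)) = 0) :
    (∀ θ q γ : ℝ, 0 < θ → q ∈ Set.Ioo (0 : ℝ) 1 → 0 < γ →
        ell U C1 C2 C3 θ q γ ≤ ell U C1 C2 C3 θs qs γs) ∧
    (∀ θ q γ : ℝ, 0 < θ → q ∈ Set.Ioo (0 : ℝ) 1 → 0 < γ →
        (θ, q, γ) ≠ (θs, qs, γs) →
        ell U C1 C2 C3 θ q γ < ell U C1 C2 C3 θs qs γs) := by
  have hne : Nonempty (Fin n) := ⟨⟨0, hn⟩⟩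
  have hT : 0 < ∑ i, U i := Finset.sum_pos (fun i _ => hU i) Finset.univ_nonempty
  have hP : 0 < (∑ i, C1 i) + ∑ i, C3 i := by linarith
  -- the q stationarity condition
  have h1C1 : ∑ i, (1 - C1 i) = (∑ i, C2 i) + ∑ i, C3 i := by
    rw [← Finset.sum_add_distrib]
    exact Finset.sum_congr rfl fun i _ => by linarith [hsum i]
  have hqv : qs = (∑ i, C2 i) / ((∑ i, C2 i) + ∑ i, C3 i) := by rw [hq_eq, h1C1]
  -- the γ stationarity condition
  have h1C2 : ∑ i, (1 - C2 i) = (∑ i, C1 i) + ∑ i, C3 i := by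
    rw [← Finset.sum_add_distrib]
    exact Finset.sum_congr rfl fun i _ => by linarith [hsum i]
  have hγv : γs = ((∑ i, C1 i) + ∑ i, C3 i) / (∑ i, U i) := by rw [hγ_eq, h1C2]
  -- the θ stationarity condition
  have hM : ∑ i, (C3 i - 1) * U i = -∑ i, (C1 i + C2 i) * U i := by
    rw [← Finset.sum_neg_distrib]
    exact Finset.sum_congr rfl fun i _ => by linear_combination (U i) * hsum i
  rw [hM] at hθ_eq
  have hAθ : (∑ i, C2 i) = θs * ((∑ i, (C1 i + C2 i) * U i)
      - ∑ i, C3 i * U i * Real.exp (-θs * U i) / (1 - Real.exp (-θs * U i))) := by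
    linear_combination hθ_eq
  -- rewriting the sums appearing in ell_eq
  have hPsum : ∑ i, (C1 i + C3 i) = (∑ i, C1 i) + ∑ i, C3 i := Finset.sum_add_distrib
  have hTsum : ∑ i, (C1 i + C2 i + C3 i) * U i = ∑ i, U i :=
    Finset.sum_congr rfl fun i _ => by rw [hsum i, one_mul]
  -- the concavity bound for the exponential term
  have hF : ∀ θ : ℝ, 0 < θ →
      (∑ i, C3 i * Real.log (1 - Real.exp (-θ * U i)))
        - (∑ i, C3 i * Real.log (1 - Real.exp (-θs * U i)))
        ≤ (θ - θs) * ∑ i, C3 i * U i * Real.exp (-θs * U i)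
            / (1 - Real.exp (-θs * U i)) := by
    intro θ hθ
    rw [← Finset.sum_sub_distrib, Finset.mul_sum]
    apply Finset.sum_le_sum
    intro i _
    have hs : 0 < θs * U i := mul_pos hθs (hU i)
    have ht : 0 < θ * U i := mul_pos hθ (hU i)
    have step := mul_le_mul_of_nonneg_left (phi_tangent hs ht) (hC3 i).1
    simp only [neg_mul, ← mul_sub]
    calc C3 i * (Real.log (1 - Real.exp (-(θ * U i)))
            - Real.log (1 - Real.exp (-(θs * U i))))
        ≤ C3 i * ((θ * U i - θs * U i) * Real.exp (-(θs * U i))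
            / (1 - Real.exp (-(θs * U i)))) := step
      _ = (θ - θs) * (C3 i * U i * Real.exp (-(θs * U i))
            / (1 - Real.exp (-(θs * U i)))) := by ring
  have main : ∀ θ q γ : ℝ, 0 < θ → q ∈ Set.Ioo (0 : ℝ) 1 → 0 < γ →
      (ell U C1 C2 C3 θ q γ ≤ ell U C1 C2 C3 θs qs γs) ∧
      ((θ ≠ θs ∨ q ≠ qs ∨ γ ≠ γs) →
        ell U C1 C2 C3 θ q γ < ell U C1 C2 C3 θs qs γs) := by
    intro θ q γ hθ hq hγ
    have h := em_core (A := ∑ i, C2 i) (B := ∑ i, C3 i)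
      (P := (∑ i, C1 i) + ∑ i, C3 i) (T := ∑ i, U i)
      (M := ∑ i, (C1 i + C2 i) * U i)
      (R := ∑ i, C3 i * U i * Real.exp (-θs * U i) / (1 - Real.exp (-θs * U i)))
      (Fθ := ∑ i, C3 i * Real.log (1 - Real.exp (-θ * U i)))
      (Fθs := ∑ i, C3 i * Real.log (1 - Real.exp (-θs * U i)))
      hS2 hS3 hP hT hθ hθs hq.1 hq.2 hqs.1 hqs.2 hγ hγs hqv hγv hAθ (hF θ hθ)
    rw [ell_eq U C1 C2 C3 θ q γ, ell_eq U C1 C2 C3 θs qs γs, hPsum, hTsum]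
    exact h
  constructor
  · intro θ q γ hθ hq hγ
    exact (main θ q γ hθ hq hγ).1
  · intro θ q γ hθ hq hγ hdiff
    apply (main θ q γ hθ hq hγ).2
    by_contra hc
    push_neg at hc
    exact hdiff (by rw [hc.1, hc.2.1, hc.2.2])
end
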